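/- arXiv:1206.1372 — 2 statements merged into one kernel-verified Lean document; each statement's English description precedes it below -/
import Mathlib

section
/- Let U ⊆ ℝⁿ be open, let g : U → (ℝⁿ →ₗ ℝⁿ →ₗ ℝ) be a smooth map such that each g(q) is a symmetric nondegenerate bilinear form, with matrix entries g_{ij}(q), inverse matrix entries g^{lk}(q), and Christoffel symbols Γˡ_{ij}(q) = (1/2) Σ_k g^{lk}(q)(∂g_{jk}/∂qⁱ + ∂g_{ik}/∂qʲ − ∂g_{ij}/∂qᵏ)(q). Define on U × ℝⁿ the Liouville 1-form θ(q,v)(x,y) = Σ_{j,k} g_{jk}(q) vᵏ xʲ, the symplectic 2-form ω₂(p)(X,Y) = (Dθ(p)X)(Y) − (Dθ(p)Y)(X) (coordinate exterior derivative of θ, D denoting the Fréchet derivative), and the kinetic energy T(q,v) = (1/2) Σ_{i,j} g_{ij}(q) vⁱ vʲ. Let f : U × ℝⁿ → ℝⁿ be smooth, let D be the vector field D(q,v) = (v, f(q,v)) on U × ℝⁿ, let α : U × ℝⁿ → (ℝⁿ)* be a map, and let α̂ be its horizontal lift α̂(q,v)(x,y) = α(q,v)(x). Then the Newton–Lagrange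 equation i_D ω₂ + dT + α̂ = 0 holds at every point of U × ℝⁿ (where dT is the Fréchet derivative of T and i_D ω₂ (p) = ω₂(p)(D(p), ·)) if and only if for all (q,v) ∈ U × ℝⁿ and all l, fˡ(q,v) = −( Σ_k g^{lk}(q) α_k(q,v) + Σ_{i,j} Γˡ_{ij}(q) vⁱ vʲ ), where α_k(q,v) = α(q,v)(e_k) are the components of α. -/
/- Tangent bundle of an open set `U ⊆ ℝⁿ` is `U × ℝⁿ`; points are `(q, v)`. -/

/-- The `i`-th standard basis vector of `ℝⁿ`. -/
noncomputable def basisVec {n : ℕ} (i : Fin n) : Fin n → ℝ := Pi.single i 1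

/-- The Christoffel symbols `Γˡ_{ij}(q) = (1/2) Σ_k g^{lk}(q) (∂_i g_{jk} + ∂_j g_{ik} − ∂_k g_{ij})(q)`
of a metric `g` with inverse coefficients `ginv`. -/
noncomputable def christoffel {n : ℕ}
    (g : (Fin n → ℝ) → ((Fin n → ℝ) →L[ℝ] (Fin n → ℝ) →L[ℝ] ℝ))
    (ginv : (Fin n → ℝ) → Fin n → Fin n → ℝ)
    (l i j : Fin n) (q : Fin n → ℝ) : ℝ :=
  (1/2) * ∑ k, ginv q l k *
    (fderiv ℝ (fun p => g p (basisVec j) (basisVec k)) q (basisVec i)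
      + fderiv ℝ (fun p => g p (basisVec i) (basisVec k)) q (basisVec j)
      - fderiv ℝ (fun p => g p (basisVec i) (basisVec j)) q (basisVec k))

/-- The kinetic energy `T(q,v) = (1/2) g(q)(v,v)` on `U × ℝⁿ`. -/
noncomputable def kineticEnergy {n : ℕ}
    (g : (Fin n → ℝ) → ((Fin n → ℝ) →L[ℝ] (Fin n → ℝ) →L[ℝ] ℝ)) :
    (Fin n → ℝ) × (Fin n → ℝ) → ℝ :=
  fun p => (1/2) * g p.1 p.2 p.2

/-- The Liouville 1-form `θ(q,v)(x,y) = g(q)(v,x)` on `U × ℝⁿ`. -/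
noncomputable def liouville {n : ℕ}
    (g : (Fin n → ℝ) → ((Fin n → ℝ) →L[ℝ] (Fin n → ℝ) →L[ℝ] ℝ)) :
    (Fin n → ℝ) × (Fin n → ℝ) → (((Fin n → ℝ) × (Fin n → ℝ)) →L[ℝ] ℝ) :=
  fun p => (g p.1 p.2).comp (ContinuousLinearMap.fst ℝ (Fin n → ℝ) (Fin n → ℝ))

/-- The symplectic form `ω₂ = dθ` : `ω₂(p)(X,Y) = (Dθ(p)X)(Y) − (Dθ(p)Y)(X)`. -/
noncomputable def omega2 {n : ℕ}
    (g : (Fin n → ℝ) → ((Fin n → ℝ) →L[ℝ] (Fin n → ℝ) →L[ℝ] ℝ))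
    (p X Y : (Fin n → ℝ) × (Fin n → ℝ)) : ℝ :=
  fderiv ℝ (liouville g) p X Y - fderiv ℝ (liouville g) p Y X

section NLAux

variable {n : ℕ}

lemma basis_expansion (x : Fin n → ℝ) : x = ∑ m, x m • basisVec m := by
  ext j
  simp [basisVec, Pi.single_apply, Finset.sum_ite_eq']

lemma clm_expand (φ : (Fin n → ℝ) →L[ℝ] ℝ) (x : Fin n → ℝ) :
    φ x = ∑ i, x i * φ (basisVec i) := by
  conv_lhs => rw [basis_expansion x]
  simp

lemma bilin_expand₁ (B : (Fin n → ℝ) →L[ℝ] (Fin n → ℝ) →L[ℝ] ℝ) (u y : Fin n → ℝ) :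
    B u y = ∑ i, u i * B (basisVec i) y := by
  conv_lhs => rw [basis_expansion u]
  simp

lemma bilin_expand₂ (B : (Fin n → ℝ) →L[ℝ] (Fin n → ℝ) →L[ℝ] ℝ) (u w : Fin n → ℝ) :
    B u w = ∑ i, ∑ j, u i * w j * B (basisVec i) (basisVec j) := by
  conv_lhs => rw [basis_expansion u, basis_expansion w]
  simp [Finset.mul_sum, mul_assoc]
  rw [Finset.sum_comm]
  exact Finset.sum_congr rfl fun i _ => Finset.sum_congr rfl fun j _ => by ring

lemma trilin_expand (T : (Fin n → ℝ) →L[ℝ] (Fin n → ℝ) →L[ℝ] (Fin n → ℝ) →L[ℝ] ℝ)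
    (u w y : Fin n → ℝ) :
    T u w y = ∑ i, ∑ j, u i * w j * T (basisVec i) (basisVec j) y := by
  conv_lhs => rw [basis_expansion u, basis_expansion w]
  simp [Finset.mul_sum, mul_assoc]
  rw [Finset.sum_comm]
  exact Finset.sum_congr rfl fun i _ => Finset.sum_congr rfl fun j _ => by ring

lemma theta_hasFDeriv {U : Set (Fin n → ℝ)} (hU : IsOpen U)
    {g : (Fin n → ℝ) → ((Fin n → ℝ) →L[ℝ] (Fin n → ℝ) →L[ℝ] ℝ)}
    (hg : ContDiffOn ℝ (⊤ : ℕ∞) g U) {p : (Fin n → ℝ) × (Fin n → ℝ)} (hp : p.1 ∈ U) :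
    HasFDerivAt (fun p : (Fin n → ℝ) × (Fin n → ℝ) => g p.1 p.2)
      ((g p.1).comp (ContinuousLinearMap.snd ℝ (Fin n → ℝ) (Fin n → ℝ))
        + ((fderiv ℝ g p.1).comp (ContinuousLinearMap.fst ℝ (Fin n → ℝ) (Fin n → ℝ))).flip p.2) p := by
  have hdg : DifferentiableAt ℝ g p.1 :=
    ((hg p.1 hp).contDiffAt (hU.mem_nhds hp)).differentiableAt (by simp)
  have h1 : HasFDerivAt (fun p : (Fin n → ℝ) × (Fin n → ℝ) => g p.1)
      ((fderiv ℝ g p.1).comp (ContinuousLinearMap.fst ℝ (Fin n → ℝ) (Fin n → ℝ))) p :=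
    HasFDerivAt.comp (g := g) (f := Prod.fst) p hdg.hasFDerivAt (hasFDerivAt_fst (𝕜 := ℝ))
  exact h1.clm_apply hasFDerivAt_snd

lemma liouville_fderiv' {U : Set (Fin n → ℝ)} (hU : IsOpen U)
    {g : (Fin n → ℝ) → ((Fin n → ℝ) →L[ℝ] (Fin n → ℝ) →L[ℝ] ℝ)}
    (hg : ContDiffOn ℝ (⊤ : ℕ∞) g U) {p : (Fin n → ℝ) × (Fin n → ℝ)} (hp : p.1 ∈ U)
    (X Y : (Fin n → ℝ) × (Fin n → ℝ)) :
    fderiv ℝ (liouville g) p X Y = fderiv ℝ g p.1 X.1 p.2 Y.1 + g p.1 X.2 Y.1 := by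
  set compFst : ((Fin n → ℝ) →L[ℝ] ℝ) →L[ℝ] (((Fin n → ℝ) × (Fin n → ℝ)) →L[ℝ] ℝ) :=
    (ContinuousLinearMap.compL ℝ ((Fin n → ℝ) × (Fin n → ℝ)) (Fin n → ℝ) ℝ).flip
      (ContinuousLinearMap.fst ℝ (Fin n → ℝ) (Fin n → ℝ)) with hcf
  have h2 := theta_hasFDeriv hU hg hp
  have hLe : liouville g = fun p => compFst (g p.1 p.2) := rfl
  have hdiff : DifferentiableAt ℝ (liouville g) p := by
    rw [hLe]
    exact compFst.differentiableAt.comp p h2.differentiableAt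
  have h5 : fderiv ℝ (fun p => liouville g p Y) p
      = (liouville g p).comp (fderiv ℝ (fun _ : (Fin n → ℝ) × (Fin n → ℝ) => Y) p)
        + (fderiv ℝ (liouville g) p).flip Y :=
    fderiv_clm_apply hdiff (differentiableAt_const Y)
  have h6 : HasFDerivAt (fun p : (Fin n → ℝ) × (Fin n → ℝ) => g p.1 p.2 Y.1)
      ((g p.1 p.2).comp 0
        + ((g p.1).comp (ContinuousLinearMap.snd ℝ (Fin n → ℝ) (Fin n → ℝ))
        + ((fderiv ℝ g p.1).comp (ContinuousLinearMap.fst ℝ (Fin n → ℝ) (Fin n → ℝ))).flip p.2).flip Y.1) p :=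
    h2.clm_apply (hasFDerivAt_const Y.1 p)
  have h7 : (fun p : (Fin n → ℝ) × (Fin n → ℝ) => liouville g p Y)
      = fun p : (Fin n → ℝ) × (Fin n → ℝ) => g p.1 p.2 Y.1 := rfl
  have := h5.symm
  rw [h7] at this
  rw [h6.fderiv] at this
  have h8 := congrFun (congrArg DFunLike.coe this) X
  simp only [fderiv_fun_const, ContinuousLinearMap.comp_zero, Pi.zero_apply,
    ContinuousLinearMap.zero_comp, zero_add, ContinuousLinearMap.add_apply,
    ContinuousLinearMap.comp_apply, ContinuousLinearMap.flip_apply,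
    ContinuousLinearMap.zero_apply, ContinuousLinearMap.coe_snd',
    ContinuousLinearMap.coe_fst'] at h8
  rw [h8, add_comm]

lemma liouville_fderiv {U : Set (Fin n → ℝ)} (hU : IsOpen U)
    {g : (Fin n → ℝ) → ((Fin n → ℝ) →L[ℝ] (Fin n → ℝ) →L[ℝ] ℝ)}
    (hg : ContDiffOn ℝ (⊤ : ℕ∞) g U) {q v : Fin n → ℝ} (hq : q ∈ U)
    (X Y : (Fin n → ℝ) × (Fin n → ℝ)) :
    fderiv ℝ (liouville g) (q, v) X Y = fderiv ℝ g q X.1 v Y.1 + g q X.2 Y.1 :=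
  liouville_fderiv' hU hg hq X Y

lemma kinetic_fderiv' {U : Set (Fin n → ℝ)} (hU : IsOpen U)
    {g : (Fin n → ℝ) → ((Fin n → ℝ) →L[ℝ] (Fin n → ℝ) →L[ℝ] ℝ)}
    (hg : ContDiffOn ℝ (⊤ : ℕ∞) g U) {p : (Fin n → ℝ) × (Fin n → ℝ)} (hp : p.1 ∈ U)
    (X : (Fin n → ℝ) × (Fin n → ℝ)) :
    fderiv ℝ (kineticEnergy g) p X
      = (1/2) * (fderiv ℝ g p.1 X.1 p.2 p.2 + g p.1 X.2 p.2 + g p.1 p.2 X.2) := by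
  have h4 := (theta_hasFDeriv hU hg hp).clm_apply hasFDerivAt_snd
  have hk := h4.const_mul (1/2 : ℝ)
  have h9 : kineticEnergy g = fun p : (Fin n → ℝ) × (Fin n → ℝ) => (1/2 : ℝ) * g p.1 p.2 p.2 := rfl
  rw [h9, hk.fderiv]
  simp [ContinuousLinearMap.comp_apply, ContinuousLinearMap.flip_apply]
  ring

lemma kinetic_fderiv {U : Set (Fin n → ℝ)} (hU : IsOpen U)
    {g : (Fin n → ℝ) → ((Fin n → ℝ) →L[ℝ] (Fin n → ℝ) →L[ℝ] ℝ)}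
    (hg : ContDiffOn ℝ (⊤ : ℕ∞) g U) {q v : Fin n → ℝ} (hq : q ∈ U)
    (X : (Fin n → ℝ) × (Fin n → ℝ)) :
    fderiv ℝ (kineticEnergy g) (q, v) X
      = (1/2) * (fderiv ℝ g q X.1 v v + g q X.2 v + g q v X.2) :=
  kinetic_fderiv' hU hg hq X

lemma entry_fderiv {U : Set (Fin n → ℝ)} (hU : IsOpen U)
    {g : (Fin n → ℝ) → ((Fin n → ℝ) →L[ℝ] (Fin n → ℝ) →L[ℝ] ℝ)}
    (hg : ContDiffOn ℝ (⊤ : ℕ∞) g U) {q : Fin n → ℝ} (hq : q ∈ U) (u w x : Fin n → ℝ) :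
    fderiv ℝ (fun p => g p u w) q x = fderiv ℝ g q x u w := by
  have hdg : DifferentiableAt ℝ g q :=
    ((hg q hq).contDiffAt (hU.mem_nhds hq)).differentiableAt (by simp)
  have h1 := hdg.hasFDerivAt.clm_apply (hasFDerivAt_const u q)
  have h2 := h1.clm_apply (hasFDerivAt_const w q)
  rw [h2.fderiv]
  simp

lemma matrix_flip {G NG : Fin n → Fin n → ℝ}
    (hMN : ∀ i j, ∑ k, G i k * NG k j = if i = j then 1 else 0) :
    ∀ i j, ∑ k, NG i k * G k j = if i = j then 1 else 0 := by
  have h1 : (Matrix.of G * Matrix.of NG) = 1 := by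
    ext i j
    simp only [Matrix.mul_apply, Matrix.of_apply, Matrix.one_apply]
    exact hMN i j
  have h2 := mul_eq_one_comm.mp h1
  intro i j
  have h3 := congrFun (congrFun h2 i) j
  simpa only [Matrix.mul_apply, Matrix.of_apply, Matrix.one_apply] using h3

lemma algebra_equiv (G : Fin n → Fin n → ℝ) (Gsymm : ∀ i j, G i j = G j i)
    (NG : Fin n → Fin n → ℝ)
    (hMN : ∀ i j, ∑ k, G i k * NG k j = if i = j then 1 else 0)
    (F c : Fin n → ℝ) :
    (∀ m, ∑ j, F j * G j m = - c m) ↔ (∀ l, F l = - ∑ k, NG l k * c k) := by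
  have hNM := matrix_flip hMN
  constructor
  · intro hS l
    calc F l = ∑ j, (if l = j then 1 else 0) * F j := by
          simp [Finset.sum_ite_eq, ite_mul]
      _ = ∑ j, (∑ m, NG l m * G m j) * F j := by
          exact Finset.sum_congr rfl fun j _ => by rw [hNM l j]
      _ = ∑ m, NG l m * ∑ j, F j * G j m := by
          simp only [Finset.sum_mul, Finset.mul_sum]
          rw [Finset.sum_comm]
          exact Finset.sum_congr rfl fun m _ => Finset.sum_congr rfl fun j _ => by
            rw [Gsymm m j]; ring
      _ = - ∑ k, NG l k * c k := by
          simp only [hS]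
          rw [← Finset.sum_neg_distrib]
          exact Finset.sum_congr rfl fun m _ => by ring
  · intro hT m
    calc ∑ j, F j * G j m = ∑ j, G m j * (- ∑ k, NG j k * c k) := by
          exact Finset.sum_congr rfl fun j _ => by rw [hT j, Gsymm j m]; ring
      _ = - ∑ k, (∑ j, G m j * NG j k) * c k := by
          simp only [mul_neg, Finset.mul_sum, Finset.sum_mul, ← Finset.sum_neg_distrib]
          rw [Finset.sum_comm]
          exact Finset.sum_congr rfl fun k _ => Finset.sum_congr rfl fun j _ => by ring
      _ = - c m := by
          simp only [hMN m]
          simp [ite_mul]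

end NLAux

section NLMain

variable {n : ℕ} {U : Set (Fin n → ℝ)}
  {g : (Fin n → ℝ) → ((Fin n → ℝ) →L[ℝ] (Fin n → ℝ) →L[ℝ] ℝ)}

lemma newton_pointwise (hU : IsOpen U) (hg : ContDiffOn ℝ (⊤ : ℕ∞) g U)
    (hsymm : ∀ q ∈ U, ∀ u w : Fin n → ℝ, g q u w = g q w u)
    (f : (Fin n → ℝ) × (Fin n → ℝ) → (Fin n → ℝ))
    (α : (Fin n → ℝ) × (Fin n → ℝ) → ((Fin n → ℝ) →L[ℝ] ℝ))
    {q : Fin n → ℝ} (hq : q ∈ U) (v : Fin n → ℝ) :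
    (∀ X : (Fin n → ℝ) × (Fin n → ℝ),
        omega2 g (q, v) (v, f (q, v)) X + fderiv ℝ (kineticEnergy g) (q, v) X + α (q, v) X.1 = 0)
    ↔ ∀ m : Fin n,
      (∑ i, ∑ j, v i * v j * fderiv ℝ (fun p => g p (basisVec j) (basisVec m)) q (basisVec i))
        + (∑ j, f (q, v) j * g q (basisVec j) (basisVec m))
        + α (q, v) (basisVec m)
        - (1/2) * ∑ i, ∑ j, v i * v j *
            fderiv ℝ (fun p => g p (basisVec i) (basisVec j)) q (basisVec m) = 0 := by
  set A := fderiv ℝ g q with hA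
  have hlhs : ∀ X : (Fin n → ℝ) × (Fin n → ℝ),
      omega2 g (q, v) (v, f (q, v)) X + fderiv ℝ (kineticEnergy g) (q, v) X + α (q, v) X.1
        = A v v X.1 + g q (f (q, v)) X.1 + α (q, v) X.1 - (1/2) * (A X.1 v v) := by
    intro X
    unfold omega2
    rw [liouville_fderiv hU hg hq (v, f (q, v)) X,
        liouville_fderiv hU hg hq X (v, f (q, v)),
        kinetic_fderiv hU hg hq X]
    have hs : g q v X.2 = g q X.2 v := hsymm q hq v X.2
    simp only [← hA]
    rw [hs]
    ring
  have hcoord : ∀ m : Fin n,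
      A v v (basisVec m) + g q (f (q, v)) (basisVec m) + α (q, v) (basisVec m)
        - (1/2) * (A (basisVec m) v v)
      = (∑ i, ∑ j, v i * v j * fderiv ℝ (fun p => g p (basisVec j) (basisVec m)) q (basisVec i))
        + (∑ j, f (q, v) j * g q (basisVec j) (basisVec m))
        + α (q, v) (basisVec m)
        - (1/2) * ∑ i, ∑ j, v i * v j *
            fderiv ℝ (fun p => g p (basisVec i) (basisVec j)) q (basisVec m) := by
    intro m
    have e1 : A v v (basisVec m)
        = ∑ i, ∑ j, v i * v j * fderiv ℝ (fun p => g p (basisVec j) (basisVec m)) q (basisVec i) := by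
      rw [trilin_expand A v v (basisVec m)]
      exact Finset.sum_congr rfl fun i _ => Finset.sum_congr rfl fun j _ => by
        rw [entry_fderiv hU hg hq (basisVec j) (basisVec m) (basisVec i), hA]
    have e2 : g q (f (q, v)) (basisVec m)
        = ∑ j, f (q, v) j * g q (basisVec j) (basisVec m) :=
      bilin_expand₁ (g q) (f (q, v)) (basisVec m)
    have e3 : A (basisVec m) v v
        = ∑ i, ∑ j, v i * v j * fderiv ℝ (fun p => g p (basisVec i) (basisVec j)) q (basisVec m) := by
      rw [bilin_expand₂ (A (basisVec m)) v v]
      exact Finset.sum_congr rfl fun i _ => Finset.sum_congr rfl fun j _ => by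
        rw [entry_fderiv hU hg hq (basisVec i) (basisVec j) (basisVec m), hA]
    rw [e1, e2, e3]
  set Φ : (Fin n → ℝ) →L[ℝ] ℝ := A v v + g q (f (q, v)) + α (q, v)
      - (1/2 : ℝ) • ((ContinuousLinearMap.apply ℝ ℝ v).comp
          ((ContinuousLinearMap.apply ℝ ((Fin n → ℝ) →L[ℝ] ℝ) v).comp A)) with hΦ
  have hΦval : ∀ x : Fin n → ℝ,
      Φ x = A v v x + g q (f (q, v)) x + α (q, v) x - (1/2) * (A x v v) := by
    intro x
    rw [hΦ]
    simp [ContinuousLinearMap.sub_apply, ContinuousLinearMap.add_apply,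
      ContinuousLinearMap.smul_apply, ContinuousLinearMap.comp_apply,
      ContinuousLinearMap.apply_apply]
  constructor
  · intro H m
    rw [← hcoord m]
    have := H (basisVec m, 0)
    rw [hlhs] at this
    exact this
  · intro H X
    rw [hlhs X, ← hΦval X.1, clm_expand Φ X.1]
    have hz : ∀ m : Fin n, Φ (basisVec m) = 0 := by
      intro m
      rw [hΦval, hcoord m]
      exact H m
    simp [hz]

end NLMain

lemma coord_equiv {n : ℕ} (P : Fin n → Fin n → Fin n → ℝ) (G NG : Fin n → Fin n → ℝ)
    (Gsymm : ∀ i j, G i j = G j i)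
    (hMN : ∀ i j, ∑ k, G i k * NG k j = if i = j then 1 else 0)
    (F a v : Fin n → ℝ) (Γc : Fin n → Fin n → Fin n → ℝ)
    (hΓ : ∀ l i j, Γc l i j = ∑ k, NG l k * ((1/2) * (P i j k + P j i k - P k i j))) :
    (∀ m, (∑ i, ∑ j, v i * v j * P i j m) + (∑ j, F j * G j m) + a m
        - (1/2) * ∑ i, ∑ j, v i * v j * P m i j = 0)
    ↔ (∀ l, F l = -((∑ k, NG l k * a k) + ∑ i, ∑ j, Γc l i j * v i * v j)) := by
  have key : ∀ m, (∑ i, ∑ j, v i * v j * ((1/2) * (P i j m + P j i m - P m i j)))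
      = (∑ i, ∑ j, v i * v j * P i j m) - (1/2) * ∑ i, ∑ j, v i * v j * P m i j := by
    intro m
    have hAB : (∑ i, ∑ j, v i * v j * P i j m) = ∑ i, ∑ j, v i * v j * P j i m := by
      rw [Finset.sum_comm]
      exact Finset.sum_congr rfl fun i _ => Finset.sum_congr rfl fun j _ => by ring
    have expand : (∑ i, ∑ j, v i * v j * ((1/2) * (P i j m + P j i m - P m i j)))
        = (1/2) * (∑ i, ∑ j, v i * v j * P i j m)
          + (1/2) * (∑ i, ∑ j, v i * v j * P j i m)
          - (1/2) * (∑ i, ∑ j, v i * v j * P m i j) := by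
      simp only [Finset.mul_sum, ← Finset.sum_add_distrib, ← Finset.sum_sub_distrib]
      exact Finset.sum_congr rfl fun i _ => Finset.sum_congr rfl fun j _ => by ring
    rw [expand, ← hAB]; ring
  set c : Fin n → ℝ :=
    fun m => a m + ∑ i, ∑ j, v i * v j * ((1/2) * (P i j m + P j i m - P m i j)) with hc
  have step1 : (∀ m, (∑ i, ∑ j, v i * v j * P i j m) + (∑ j, F j * G j m) + a m
        - (1/2) * ∑ i, ∑ j, v i * v j * P m i j = 0)
      ↔ (∀ m, ∑ j, F j * G j m = - c m) := by
    apply forall_congr'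
    intro m
    have hck : c m = a m + ((∑ i, ∑ j, v i * v j * P i j m)
        - (1/2) * ∑ i, ∑ j, v i * v j * P m i j) := by rw [hc]; simp only; rw [key m]
    constructor
    · intro h; rw [hck]; linarith
    · intro h; rw [hck] at h; linarith
  have step3 : ∀ l, (- ∑ k, NG l k * c k : ℝ)
      = -((∑ k, NG l k * a k) + ∑ i, ∑ j, Γc l i j * v i * v j) := by
    intro l
    have h1 : ∑ i, ∑ j, Γc l i j * v i * v j
        = ∑ k, NG l k * (∑ i, ∑ j, v i * v j * ((1/2) * (P i j k + P j i k - P k i j))) := by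
      simp only [hΓ, Finset.sum_mul, Finset.mul_sum]
      calc ∑ i, ∑ j, ∑ k, NG l k * ((1/2) * (P i j k + P j i k - P k i j)) * v i * v j
          = ∑ i, ∑ k, ∑ j, NG l k * ((1/2) * (P i j k + P j i k - P k i j)) * v i * v j :=
            Finset.sum_congr rfl fun i _ => Finset.sum_comm
        _ = ∑ k, ∑ i, ∑ j, NG l k * ((1/2) * (P i j k + P j i k - P k i j)) * v i * v j :=
            Finset.sum_comm
        _ = ∑ k, ∑ i, ∑ j, NG l k * (v i * v j * ((1/2) * (P i j k + P j i k - P k i j))) :=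
            Finset.sum_congr rfl fun k _ => Finset.sum_congr rfl fun i _ =>
              Finset.sum_congr rfl fun j _ => by ring
    rw [h1]
    have h2 : ∑ k, NG l k * c k
        = (∑ k, NG l k * a k)
          + ∑ k, NG l k * (∑ i, ∑ j, v i * v j * ((1/2) * (P i j k + P j i k - P k i j))) := by
      rw [← Finset.sum_add_distrib]
      exact Finset.sum_congr rfl fun k _ => by rw [hc]; simp only; ring
    rw [h2]
  rw [step1, algebra_equiv G Gsymm NG hMN F c]
  exact forall_congr' fun l => by rw [step3 l]


/-- For a smooth pseudo-Riemannian metric `g` on an open set `U ⊆ ℝⁿ`,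
the Newton–Lagrange equation `i_D ω₂ + dT + α̂ = 0` for the second order differential
equation `D(q,v) = (v, f(q,v))` holds at every point of `U × ℝⁿ` if and only if
`fˡ = −(Σ_k g^{lk} α_k + Σ_{ij} Γˡ_{ij} vⁱ vʲ)` in coordinates. -/
theorem newton_lagrange_coordinates {n : ℕ} (U : Set (Fin n → ℝ)) (hU : IsOpen U)
    (g : (Fin n → ℝ) → ((Fin n → ℝ) →L[ℝ] (Fin n → ℝ) →L[ℝ] ℝ))
    (hg : ContDiffOn ℝ (⊤ : ℕ∞) g U)
    (hsymm : ∀ q ∈ U, ∀ u w : Fin n → ℝ, g q u w = g q w u)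
    (hnondeg : ∀ q ∈ U, ∀ u : Fin n → ℝ, (∀ w, g q u w = 0) → u = 0)
    (ginv : (Fin n → ℝ) → Fin n → Fin n → ℝ)
    (hginv : ∀ q ∈ U, ∀ i j : Fin n,
      (∑ k, g q (basisVec i) (basisVec k) * ginv q k j) = if i = j then 1 else 0)
    (f : (Fin n → ℝ) × (Fin n → ℝ) → (Fin n → ℝ))
    (hf : ContDiffOn ℝ (⊤ : ℕ∞) f (U ×ˢ (Set.univ : Set (Fin n → ℝ))))
    (α : (Fin n → ℝ) × (Fin n → ℝ) → ((Fin n → ℝ) →L[ℝ] ℝ)) :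
    (∀ p : (Fin n → ℝ) × (Fin n → ℝ), p.1 ∈ U →
      ∀ X : (Fin n → ℝ) × (Fin n → ℝ),
        omega2 g p (p.2, f p) X + fderiv ℝ (kineticEnergy g) p X + α p X.1 = 0)
    ↔ (∀ q ∈ U, ∀ (v : Fin n → ℝ) (l : Fin n),
        f (q, v) l = -((∑ k, ginv q l k * α (q, v) (basisVec k))
          + ∑ i, ∑ j, christoffel g ginv l i j q * v i * v j)) := by
  have hΓ : ∀ q ∈ U, ∀ l i j : Fin n, christoffel g ginv l i j q
      = ∑ k, ginv q l k * ((1/2) *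
          (fderiv ℝ (fun p => g p (basisVec j) (basisVec k)) q (basisVec i)
            + fderiv ℝ (fun p => g p (basisVec i) (basisVec k)) q (basisVec j)
            - fderiv ℝ (fun p => g p (basisVec i) (basisVec j)) q (basisVec k))) := by
    intro q _ l i j
    unfold christoffel
    rw [Finset.mul_sum]
    exact Finset.sum_congr rfl fun k _ => by ring
  constructor
  · intro H q hq v l
    have h1 := (newton_pointwise hU hg hsymm f α hq v).mp (fun X => H (q, v) hq X)
    exact (coord_equiv
      (fun i j k => fderiv ℝ (fun p => g p (basisVec j) (basisVec k)) q (basisVec i))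
      (fun i j => g q (basisVec i) (basisVec j)) (ginv q)
      (fun i j => hsymm q hq _ _) (hginv q hq)
      (fun j => f (q, v) j) (fun k => α (q, v) (basisVec k)) v
      (fun l i j => christoffel g ginv l i j q) (hΓ q hq)).mp h1 l
  · intro H p hp X
    obtain ⟨q, v⟩ := p
    exact (newton_pointwise hU hg hsymm f α hp v).mpr
      ((coord_equiv
        (fun i j k => fderiv ℝ (fun p => g p (basisVec j) (basisVec k)) q (basisVec i))
        (fun i j => g q (basisVec i) (basisVec j)) (ginv q)
        (fun i j => hsymm q hp _ _) (hginv q hp)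
        (fun j => f (q, v) j) (fun k => α (q, v) (basisVec k)) v
        (fun l i j => christoffel g ginv l i j q) (hΓ q hp)).mpr
        (fun l => H q hp v l)) X
end

section
/- Let U ⊆ ℝⁿ be open, g : U → (ℝⁿ →ₗ ℝⁿ →ₗ ℝ) a smooth map with each g(q) a symmetric nondegenerate bilinear form, with Christoffel symbols Γˡ_{ij}, and let α : U × ℝⁿ → (ℝⁿ)* be a horizontal 1-form. Let I ⊆ ℝ be an open interval and x : I → U a twice-differentiable curve satisfying the Newton equation (x'')ˡ(t) = −( Σ_k g^{lk}(x(t)) α_k(x(t), x'(t)) + Σ_{i,j} Γˡ_{ij}(x(t)) (x')ⁱ(t) (x')ʲ(t) ) for all t ∈ I. Then for all t ∈ I, the derivative of the energy along the curve satisfies d/dt [ (1/2) g(x(t))(x'(t), x'(t)) ] = −α(x(t), x'(t))(x'(t)). -/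
set_option maxHeartbeats 2000000

lemma sum_smul_basisVec {n : ℕ} (u : Fin n → ℝ) : ∑ i, u i • basisVec i = u := by
  ext j
  simp [basisVec, Finset.sum_apply, Pi.single_apply]

lemma clm1_expand {n : ℕ} (T : (Fin n → ℝ) →L[ℝ] ℝ) (u : Fin n → ℝ) :
    T u = ∑ i, u i * T (basisVec i) := by
  conv_lhs => rw [← sum_smul_basisVec u]
  simp

lemma clm2_expand {n : ℕ} (T : (Fin n → ℝ) →L[ℝ] (Fin n → ℝ) →L[ℝ] ℝ) (u v : Fin n → ℝ) :
    T u v = ∑ i, ∑ j, u i * v j * T (basisVec i) (basisVec j) := by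
  have h1 : T u v = ∑ i, u i * T (basisVec i) v := by
    have := clm1_expand (T.flip v) u
    simpa using this
  rw [h1]
  apply Finset.sum_congr rfl; intro i _
  rw [clm1_expand (T (basisVec i)) v, Finset.mul_sum]
  apply Finset.sum_congr rfl; intro j _; ring

lemma clm3_expand {n : ℕ} (T : (Fin n → ℝ) →L[ℝ] (Fin n → ℝ) →L[ℝ] (Fin n → ℝ) →L[ℝ] ℝ)
    (u v w : Fin n → ℝ) :
    T u v w = ∑ i, ∑ j, ∑ k, u i * v j * w k * T (basisVec i) (basisVec j) (basisVec k) := by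
  have h1 : T u v w = ∑ i, u i * T (basisVec i) v w := by
    have := clm1_expand (((T.flip v).flip w)) u
    simpa using this
  rw [h1]
  apply Finset.sum_congr rfl; intro i _
  rw [clm2_expand (T (basisVec i)) v w, Finset.mul_sum]
  apply Finset.sum_congr rfl; intro j _
  rw [Finset.mul_sum]
  apply Finset.sum_congr rfl; intro k _; ring

lemma fderiv_bilin_apply {n : ℕ}
    (g : (Fin n → ℝ) → ((Fin n → ℝ) →L[ℝ] (Fin n → ℝ) →L[ℝ] ℝ))
    {q : Fin n → ℝ} {Dg : (Fin n → ℝ) →L[ℝ] ((Fin n → ℝ) →L[ℝ] (Fin n → ℝ) →L[ℝ] ℝ)}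
    (hDg : HasFDerivAt g Dg q) (v w u : Fin n → ℝ) :
    fderiv ℝ (fun p => g p v w) q u = Dg u v w := by
  set Φ : ((Fin n → ℝ) →L[ℝ] (Fin n → ℝ) →L[ℝ] ℝ) →L[ℝ] ℝ :=
    (ContinuousLinearMap.apply ℝ ℝ w).comp
      (ContinuousLinearMap.apply ℝ ((Fin n → ℝ) →L[ℝ] ℝ) v) with hΦ
  have h : HasFDerivAt (fun p => g p v w) (Φ.comp Dg) q := by
    have hΦd := Φ.hasFDerivAt (E := (Fin n → ℝ) →L[ℝ] (Fin n → ℝ) →L[ℝ] ℝ) (F := ℝ) (x := g q)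
    have h0 := @HasFDerivAt.comp ℝ _ (Fin n → ℝ) _ _ ((Fin n → ℝ) →L[ℝ] (Fin n → ℝ) →L[ℝ] ℝ) _ _ ℝ _ _ g Dg q Φ Φ hΦd hDg
    exact h0
  rw [h.fderiv]
  rfl

lemma triple_move {n : ℕ} (f : Fin n → Fin n → Fin n → ℝ) :
    ∑ m, ∑ i, ∑ j, f i j m = ∑ i, ∑ j, ∑ m, f i j m := by
  rw [Finset.sum_comm]
  apply Finset.sum_congr rfl; intro i _
  rw [Finset.sum_comm]


/-- Along every twice-differentiable curve solving the Newton equation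
of the mechanical system `(U, g, α)`, the derivative of the energy
`t ↦ (1/2) g(x(t))(x'(t), x'(t))` equals `−α(x(t), x'(t))(x'(t))`. -/
theorem energy_derivative_along_trajectory {n : ℕ} (U : Set (Fin n → ℝ)) (hU : IsOpen U)
    (g : (Fin n → ℝ) → ((Fin n → ℝ) →L[ℝ] (Fin n → ℝ) →L[ℝ] ℝ))
    (hg : ContDiffOn ℝ (⊤ : ℕ∞) g U)
    (hsymm : ∀ q ∈ U, ∀ u w : Fin n → ℝ, g q u w = g q w u)
    (hnondeg : ∀ q ∈ U, ∀ u : Fin n → ℝ, (∀ w, g q u w = 0) → u = 0)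
    (ginv : (Fin n → ℝ) → Fin n → Fin n → ℝ)
    (hginv : ∀ q ∈ U, ∀ i j : Fin n,
      (∑ k, g q (basisVec i) (basisVec k) * ginv q k j) = if i = j then 1 else 0)
    (α : (Fin n → ℝ) × (Fin n → ℝ) → ((Fin n → ℝ) →L[ℝ] ℝ))
    (I : Set ℝ) (hI : IsOpen I) (hI' : I.OrdConnected)
    (x x' x'' : ℝ → (Fin n → ℝ))
    (hxU : ∀ t ∈ I, x t ∈ U)
    (hx' : ∀ t ∈ I, HasDerivAt x (x' t) t)
    (hx'' : ∀ t ∈ I, HasDerivAt x' (x'' t) t)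
    (hNewton : ∀ t ∈ I, ∀ l : Fin n,
      x'' t l = -((∑ k, ginv (x t) l k * α (x t, x' t) (basisVec k))
        + ∑ i, ∑ j, christoffel g ginv l i j (x t) * x' t i * x' t j)) :
    ∀ t ∈ I,
      HasDerivAt (fun s => (1/2 : ℝ) * g (x s) (x' s) (x' s))
        (-(α (x t, x' t) (x' t))) t := by
  intro t ht
  have hqU : x t ∈ U := hxU t ht
  set q := x t with hq
  set a := x' t with ha
  set b := x'' t with hb
  have hDgat : DifferentiableAt ℝ g q := by
    have := (hg.differentiableOn (by simp)) q hqU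
    exact this.differentiableAt (hU.mem_nhds hqU)
  have hDg : HasFDerivAt g (fderiv ℝ g q) q := hDgat.hasFDerivAt
  set Dg := fderiv ℝ g q with hDgdef
  have hA : HasDerivAt (fun s => g (x s)) (Dg a) t := hDg.comp_hasDerivAt (E := (Fin n → ℝ) →L[ℝ] (Fin n → ℝ) →L[ℝ] ℝ) t (hx' t ht)
  have hB : HasDerivAt (fun s => g (x s) (x' s)) (Dg a a + g q b) t := by
    simpa using hA.clm_apply (hx'' t ht)
  have hC : HasDerivAt (fun s => g (x s) (x' s) (x' s))
      ((Dg a a + g q b) a + g q a b) t := by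
    simpa using hB.clm_apply (hx'' t ht)
  have hE := hC.const_mul (1/2 : ℝ)
  refine hE.congr_deriv (Eq.symm ?_)
  have hab : ((Dg a a + g q b) a + g q a b : ℝ) = Dg a a a + g q b a + g q a b := by simp
  rw [hab, hsymm q hqU a b]
  -- abbreviations as plain lambdas (definitional)
  -- Christoffel symbols via Dg
  have hchris : ∀ l i j : Fin n, christoffel g ginv l i j q
      = (1/2) * ∑ k, ginv q l k *
          (Dg (basisVec i) (basisVec j) (basisVec k)
            + Dg (basisVec j) (basisVec i) (basisVec k)
            - Dg (basisVec k) (basisVec i) (basisVec j)) := by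
    intro l i j
    unfold christoffel
    congr 1
    apply Finset.sum_congr rfl; intro k _
    rw [fderiv_bilin_apply g hDg, fderiv_bilin_apply g hDg, fderiv_bilin_apply g hDg]
  have hdelta : ∀ m k : Fin n,
      (∑ l, g q (basisVec m) (basisVec l) * ginv q l k) = if m = k then 1 else 0 :=
    fun m k => hginv q hqU m k
  have hdelta' : ∀ m k : Fin n,
      (∑ l, g q (basisVec l) (basisVec m) * ginv q l k) = if m = k then 1 else 0 := by
    intro m k
    rw [show (∑ l, g q (basisVec l) (basisVec m) * ginv q l k)
        = ∑ l, g q (basisVec m) (basisVec l) * ginv q l k from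
      Finset.sum_congr rfl fun l _ => by rw [hsymm q hqU]]
    exact hdelta m k
  -- contraction of Christoffel with the metric
  have hGamma : ∀ m i j : Fin n,
      (∑ l, g q (basisVec l) (basisVec m) * christoffel g ginv l i j q)
      = (1/2) * (Dg (basisVec i) (basisVec j) (basisVec m)
          + Dg (basisVec j) (basisVec i) (basisVec m)
          - Dg (basisVec m) (basisVec i) (basisVec j)) := by
    intro m i j
    calc (∑ l, g q (basisVec l) (basisVec m) * christoffel g ginv l i j q)
        = ∑ l, ∑ k, (1/2) * (Dg (basisVec i) (basisVec j) (basisVec k)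
            + Dg (basisVec j) (basisVec i) (basisVec k)
            - Dg (basisVec k) (basisVec i) (basisVec j))
            * (g q (basisVec l) (basisVec m) * ginv q l k) := by
          apply Finset.sum_congr rfl; intro l _
          rw [hchris, Finset.mul_sum, Finset.mul_sum]
          apply Finset.sum_congr rfl; intro k _; ring
      _ = ∑ k, (1/2) * (Dg (basisVec i) (basisVec j) (basisVec k)
            + Dg (basisVec j) (basisVec i) (basisVec k)
            - Dg (basisVec k) (basisVec i) (basisVec j))
            * (∑ l, g q (basisVec l) (basisVec m) * ginv q l k) := by
          rw [Finset.sum_comm]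
          apply Finset.sum_congr rfl; intro k _
          rw [Finset.mul_sum]
      _ = (1/2) * (Dg (basisVec i) (basisVec j) (basisVec m)
          + Dg (basisVec j) (basisVec i) (basisVec m)
          - Dg (basisVec m) (basisVec i) (basisVec j)) := by
          simp only [hdelta', mul_ite, mul_one, mul_zero]
          rw [Finset.sum_ite_eq]
          simp
  -- claim 1 : the α-part contracts to α(a)
  have hclaim1 : (∑ l, ∑ m, (∑ k, ginv q l k * α (q, a) (basisVec k)) * a m
        * g q (basisVec l) (basisVec m)) = α (q, a) a := by
    calc (∑ l, ∑ m, (∑ k, ginv q l k * α (q, a) (basisVec k)) * a m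
          * g q (basisVec l) (basisVec m))
        = ∑ l, ∑ m, ∑ k, α (q, a) (basisVec k) * a m
            * (g q (basisVec l) (basisVec m) * ginv q l k) := by
          apply Finset.sum_congr rfl; intro l _
          apply Finset.sum_congr rfl; intro m _
          rw [Finset.sum_mul, Finset.sum_mul]
          apply Finset.sum_congr rfl; intro k _; ring
      _ = ∑ m, ∑ k, α (q, a) (basisVec k) * a m
            * (∑ l, g q (basisVec l) (basisVec m) * ginv q l k) := by
          rw [Finset.sum_comm]
          apply Finset.sum_congr rfl; intro m _
          rw [Finset.sum_comm]
          apply Finset.sum_congr rfl; intro k _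
          rw [Finset.mul_sum]
      _ = ∑ m, a m * α (q, a) (basisVec m) := by
          apply Finset.sum_congr rfl; intro m _
          simp only [hdelta', mul_ite, mul_one, mul_zero]
          rw [Finset.sum_ite_eq]
          simp [mul_comm]
      _ = α (q, a) a := (clm1_expand _ a).symm
  -- renaming identities for the cubic sums
  have hs2 : (∑ i, ∑ j, ∑ m, a i * a j * a m * Dg (basisVec j) (basisVec i) (basisVec m))
      = ∑ i, ∑ j, ∑ m, a i * a j * a m * Dg (basisVec i) (basisVec j) (basisVec m) := by
    rw [Finset.sum_comm]
    apply Finset.sum_congr rfl; intro i _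
    apply Finset.sum_congr rfl; intro j _
    apply Finset.sum_congr rfl; intro m _; ring
  have hs3 : (∑ i, ∑ j, ∑ m, a i * a j * a m * Dg (basisVec m) (basisVec i) (basisVec j))
      = ∑ i, ∑ j, ∑ m, a i * a j * a m * Dg (basisVec i) (basisVec j) (basisVec m) := by
    rw [← triple_move (fun i j m => a i * a j * a m * Dg (basisVec m) (basisVec i) (basisVec j))]
    apply Finset.sum_congr rfl; intro m _
    apply Finset.sum_congr rfl; intro i _
    apply Finset.sum_congr rfl; intro j _; ring
  have hfactor : ∀ (f : Fin n → Fin n → Fin n → ℝ),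
      (∑ m, ∑ i, ∑ j, (1/2 : ℝ) * f i j m) = (1/2) * ∑ m, ∑ i, ∑ j, f i j m := by
    intro f; simp [Finset.mul_sum]
  -- claim 2 : the Christoffel part contracts to half the cubic sum
  have hclaim2 : (∑ l, ∑ m, (∑ i, ∑ j, christoffel g ginv l i j q * a i * a j) * a m
        * g q (basisVec l) (basisVec m))
      = (1/2) * ∑ i, ∑ j, ∑ m, a i * a j * a m
          * Dg (basisVec i) (basisVec j) (basisVec m) := by
    calc (∑ l, ∑ m, (∑ i, ∑ j, christoffel g ginv l i j q * a i * a j) * a m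
          * g q (basisVec l) (basisVec m))
        = ∑ l, ∑ m, ∑ i, ∑ j, a i * a j * a m
            * (g q (basisVec l) (basisVec m) * christoffel g ginv l i j q) := by
          apply Finset.sum_congr rfl; intro l _
          apply Finset.sum_congr rfl; intro m _
          rw [Finset.sum_mul, Finset.sum_mul]
          apply Finset.sum_congr rfl; intro i _
          rw [Finset.sum_mul, Finset.sum_mul]
          apply Finset.sum_congr rfl; intro j _; ring
      _ = ∑ m, ∑ i, ∑ j, ∑ l, a i * a j * a m
            * (g q (basisVec l) (basisVec m) * christoffel g ginv l i j q) := by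
          rw [Finset.sum_comm]
          apply Finset.sum_congr rfl; intro m _
          rw [Finset.sum_comm]
          apply Finset.sum_congr rfl; intro i _
          rw [Finset.sum_comm]
      _ = ∑ m, ∑ i, ∑ j, a i * a j * a m
            * ((1/2) * (Dg (basisVec i) (basisVec j) (basisVec m)
              + Dg (basisVec j) (basisVec i) (basisVec m)
              - Dg (basisVec m) (basisVec i) (basisVec j))) := by
          apply Finset.sum_congr rfl; intro m _
          apply Finset.sum_congr rfl; intro i _
          apply Finset.sum_congr rfl; intro j _
          rw [← Finset.mul_sum, hGamma]
      _ = ∑ m, ∑ i, ∑ j, ((1/2 : ℝ) * (a i * a j * a m * Dg (basisVec i) (basisVec j) (basisVec m))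
            + (1/2) * (a i * a j * a m * Dg (basisVec j) (basisVec i) (basisVec m))
            - (1/2) * (a i * a j * a m * Dg (basisVec m) (basisVec i) (basisVec j))) := by
          apply Finset.sum_congr rfl; intro m _
          apply Finset.sum_congr rfl; intro i _
          apply Finset.sum_congr rfl; intro j _; ring
      _ = (∑ m, ∑ i, ∑ j, (1/2 : ℝ) * (a i * a j * a m * Dg (basisVec i) (basisVec j) (basisVec m)))
            + (∑ m, ∑ i, ∑ j, (1/2 : ℝ) * (a i * a j * a m * Dg (basisVec j) (basisVec i) (basisVec m)))
            - (∑ m, ∑ i, ∑ j, (1/2 : ℝ) * (a i * a j * a m * Dg (basisVec m) (basisVec i) (basisVec j))) := by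
          simp only [Finset.sum_add_distrib, Finset.sum_sub_distrib]
      _ = (1/2) * (∑ m, ∑ i, ∑ j, a i * a j * a m * Dg (basisVec i) (basisVec j) (basisVec m))
            + (1/2) * (∑ m, ∑ i, ∑ j, a i * a j * a m * Dg (basisVec j) (basisVec i) (basisVec m))
            - (1/2) * (∑ m, ∑ i, ∑ j, a i * a j * a m * Dg (basisVec m) (basisVec i) (basisVec j)) := by
          rw [hfactor, hfactor, hfactor]
      _ = (1/2) * ∑ i, ∑ j, ∑ m, a i * a j * a m
            * Dg (basisVec i) (basisVec j) (basisVec m) := by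
          rw [triple_move (fun i j m => a i * a j * a m * Dg (basisVec i) (basisVec j) (basisVec m)),
            triple_move (fun i j m => a i * a j * a m * Dg (basisVec j) (basisVec i) (basisVec m)),
            triple_move (fun i j m => a i * a j * a m * Dg (basisVec m) (basisVec i) (basisVec j)),
            hs2, hs3]
          ring
  -- expansion of g q b a using the Newton equation
  have hbl : ∀ l : Fin n, b l = -((∑ k, ginv q l k * α (q, a) (basisVec k))
      + ∑ i, ∑ j, christoffel g ginv l i j q * a i * a j) := by
    intro l
    have := hNewton t ht l
    rw [← hq, ← ha, ← hb] at this
    exact this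
  have hgba : g q b a = -(α (q, a) a
      + (1/2) * ∑ i, ∑ j, ∑ m, a i * a j * a m
          * Dg (basisVec i) (basisVec j) (basisVec m)) := by
    rw [clm2_expand (g q) b a]
    calc (∑ l, ∑ m, b l * a m * g q (basisVec l) (basisVec m))
        = ∑ l, ∑ m, (-((∑ k, ginv q l k * α (q, a) (basisVec k)) * a m
              * g q (basisVec l) (basisVec m))
            - (∑ i, ∑ j, christoffel g ginv l i j q * a i * a j) * a m
              * g q (basisVec l) (basisVec m)) := by
          apply Finset.sum_congr rfl; intro l _
          apply Finset.sum_congr rfl; intro m _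
          rw [hbl l]; ring
      _ = -(∑ l, ∑ m, (∑ k, ginv q l k * α (q, a) (basisVec k)) * a m
              * g q (basisVec l) (basisVec m))
            - ∑ l, ∑ m, (∑ i, ∑ j, christoffel g ginv l i j q * a i * a j) * a m
              * g q (basisVec l) (basisVec m) := by
          simp only [Finset.sum_sub_distrib, Finset.sum_neg_distrib]
      _ = _ := by rw [hclaim1, hclaim2]; ring
  rw [clm3_expand Dg a a a, hgba]
  ring
end
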